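/- Let V be a finite-dimensional complex inner product space, A a self-adjoint endomorphism of V, and χ_A the limit non-Archimedean norm of the associated geodesic ray, i.e. χ_A(v) = −lim_{t→∞} (1/t) · log ⟨exp(−tA) v, v⟩ for nonzero v and χ_A(0) = +∞. Then for every λ ∈ ℝ the set {v ∈ V : χ_A(v) ≥ λ} equals the subspace ⨁_{μ ≥ λ} ker(A − μ·id), the sum of the eigenspaces of A for eigenvalues μ ≥ λ. -/

import Mathlib

open NormedSpace in
theorem exp_apply_eigenvector {V : Type*} [NormedAddCommGroup V] [InnerProductSpace ℂ V]
    [FiniteDimensional ℂ V] (B : V →L[ℂ] V) (v : V) (c : ℂ) (h : B v = c • v) :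
    (NormedSpace.exp B) v = Complex.exp c • v := by
  have hpow : ∀ n : ℕ, (B ^ n) v = c ^ n • v := by
    intro n
    induction n with
    | zero => simp
    | succ n ih =>
      rw [pow_succ, pow_succ]
      have : (B ^ n * B) v = (B ^ n) (B v) := rfl
      rw [this, h, map_smul, ih, smul_smul, mul_comm]
  have h1 : HasSum (fun n : ℕ => (((n.factorial : ℂ))⁻¹ • B ^ n)) (NormedSpace.exp B) :=
    NormedSpace.exp_series_hasSum_exp' B
  have h2 := ((ContinuousLinearMap.apply ℂ V v).hasSum h1)
  simp only [ContinuousLinearMap.apply_apply, ContinuousLinearMap.smul_apply, hpow] at h2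
  have h3 : HasSum (fun n : ℕ => (((n.factorial : ℂ))⁻¹ • c ^ n)) (Complex.exp c) := by
    rw [Complex.exp_eq_exp_ℂ]
    exact NormedSpace.exp_series_hasSum_exp' c
  have h4 := h3.smul_const v
  simp only [smul_assoc] at h4 h2
  exact h2.unique h4

theorem log_sum_exp_tendsto {n : ℕ} (w α : Fin n → ℝ) (hw : ∀ i, 0 ≤ w i)
    (S : Finset (Fin n)) (hS : S.Nonempty) (hSw : ∀ i, i ∈ S ↔ w i ≠ 0) :
    Filter.Tendsto (fun t : ℝ => -((1/t) * Real.log (∑ i, w i * Real.exp (-(t * α i)))))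
      Filter.atTop (nhds (S.inf' hS α)) := by
  set m := S.inf' hS α with hm
  obtain ⟨i0, hi0S, hi0⟩ := S.exists_mem_eq_inf' hS α
  have hw0 : 0 < w i0 := lt_of_le_of_ne (hw i0) (Ne.symm ((hSw i0).mp hi0S))
  set h : ℝ → ℝ := fun t => ∑ i ∈ S, w i * Real.exp (-(t * (α i - m))) with hh
  have hlow : ∀ t, w i0 ≤ h t := by
    intro t
    have : w i0 * Real.exp (-(t * (α i0 - m))) = w i0 := by
      rw [← hi0, ← hm]; simp
    rw [← this]
    exact Finset.single_le_sum (f := fun i => w i * Real.exp (-(t * (α i - m))))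
      (fun i _ => mul_nonneg (hw i) (Real.exp_nonneg _)) hi0S
  have hpos : ∀ t, 0 < h t := fun t => lt_of_lt_of_le hw0 (hlow t)
  set C : ℝ := ∑ i ∈ S, w i with hC
  have hCpos : 0 < C := lt_of_lt_of_le hw0 (Finset.single_le_sum (fun i _ => hw i) hi0S)
  have hupp : ∀ t : ℝ, 0 ≤ t → h t ≤ C := by
    intro t ht
    refine Finset.sum_le_sum fun i hi => ?_
    have h1 : Real.exp (-(t * (α i - m))) ≤ 1 := by
      rw [Real.exp_le_one_iff]
      have : m ≤ α i := Finset.inf'_le α hi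
      nlinarith
    nlinarith [hw i]
  set K : ℝ := max |Real.log (w i0)| |Real.log C| with hK
  have habs : ∀ t : ℝ, 0 ≤ t → |Real.log (h t)| ≤ K := by
    intro t ht
    rw [abs_le]
    constructor
    · calc -K ≤ -|Real.log (w i0)| := by simp [hK]
        _ ≤ Real.log (w i0) := neg_abs_le _
        _ ≤ Real.log (h t) := Real.log_le_log hw0 (hlow t)
    · calc Real.log (h t) ≤ Real.log C := Real.log_le_log (hpos t) (hupp t ht)
        _ ≤ |Real.log C| := le_abs_self _
        _ ≤ K := le_max_right _ _
  have hzero : Filter.Tendsto (fun t : ℝ => Real.log (h t) / t) Filter.atTop (nhds 0) := by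
    apply squeeze_zero_norm' (a := fun t : ℝ => K / t)
    · filter_upwards [Filter.eventually_ge_atTop (1:ℝ)] with t ht
      have ht0 : 0 < t := lt_of_lt_of_le one_pos ht
      rw [norm_div, Real.norm_eq_abs, Real.norm_eq_abs, abs_of_pos ht0]
      gcongr
      exact habs t ht0.le
    · exact Filter.Tendsto.div_atTop tendsto_const_nhds Filter.tendsto_id
  have key : Filter.Tendsto (fun t : ℝ => m - Real.log (h t) / t) Filter.atTop (nhds m) := by
    simpa using (tendsto_const_nhds (x := m) (f := Filter.atTop)).sub hzero
  apply key.congr'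
  filter_upwards [Filter.eventually_gt_atTop (0:ℝ)] with t ht
  have hsum : ∑ i, w i * Real.exp (-(t * α i)) = Real.exp (-(t * m)) * h t := by
    rw [hh, Finset.mul_sum]
    rw [← Finset.sum_subset (Finset.subset_univ S) (by
      intro i _ hi
      have : w i = 0 := by_contra fun hne => hi ((hSw i).mpr hne)
      simp [this])]
    refine Finset.sum_congr rfl fun i _ => ?_
    rw [← mul_assoc, mul_comm (Real.exp _) (w i), mul_assoc, ← Real.exp_add]
    ring_nf
  rw [hsum, Real.log_mul (Real.exp_ne_zero _) (hpos t).ne', Real.log_exp]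
  field_simp
  ring




/-- Let `V` be a finite-dimensional complex inner product space, `A` a
self-adjoint endomorphism of `V`, and `χ_A` the limit non-Archimedean norm of the
associated geodesic ray: `χ_A(v) = -lim_{t→∞} (1/t) log ⟨exp(-tA) v, v⟩` for `v ≠ 0`,
`χ_A(0) = +∞`.  Then for every `λ ∈ ℝ`, the set `{v : χ_A(v) ≥ λ}` equals the sum of the
eigenspaces of `A` for eigenvalues `μ ≥ λ`. -/
theorem statement4 {V : Type*} [NormedAddCommGroup V] [InnerProductSpace ℂ V]
    [FiniteDimensional ℂ V]
    (A : V →L[ℂ] V) (hA : ∀ x y : V, (inner ℂ (A x) y : ℂ) = inner ℂ x (A y))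
    (χ : V → EReal) (hχ0 : χ 0 = ⊤)
    (hχ : ∀ v : V, v ≠ 0 →
      Filter.Tendsto
        (fun t : ℝ =>
          ((-((1 / t) *
            Real.log ((inner ℂ ((NormedSpace.exp ((-(t : ℂ)) • A)) v) v : ℂ).re)) : ℝ) :
            EReal))
        Filter.atTop (nhds (χ v))) :
    ∀ lam : ℝ,
      {v : V | (lam : EReal) ≤ χ v} =
        ↑(⨆ (μ : ℝ) (_ : lam ≤ μ), Module.End.eigenspace (A : V →ₗ[ℂ] V) (μ : ℂ)) := by
  intro lam
  classical
  have hT : (A : V →ₗ[ℂ] V).IsSymmetric := fun x y => hA x y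
  have hn : Module.finrank ℂ V = Module.finrank ℂ V := rfl
  set b := hT.eigenvectorBasis hn with hbdef
  set α := hT.eigenvalues hn with hadef
  have hb : ∀ i, A (b i) = (α i : ℂ) • b i := fun i => hT.apply_eigenvectorBasis hn i
  have hbe : ∀ i, b i ∈ Module.End.eigenspace (A : V →ₗ[ℂ] V) ((α i : ℝ) : ℂ) :=
    fun i => Module.End.mem_eigenspace_iff.mpr (hb i)
  -- exp action on eigenvectors
  have hexp : ∀ (t : ℝ) i, (NormedSpace.exp ((-(t : ℂ)) • A)) (b i)
      = ((Real.exp (-(t * α i)) : ℝ) : ℂ) • b i := by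
    intro t i
    have h1 : ((-(t : ℂ)) • A) (b i) = (((-(t * α i) : ℝ)) : ℂ) • b i := by
      simp only [ContinuousLinearMap.smul_apply, hb i, smul_smul]
      push_cast
      ring_nf
    rw [exp_apply_eigenvector _ _ _ h1, Complex.ofReal_exp]
  -- inner product formula
  have hinner : ∀ (t : ℝ) (v : V),
      ((inner ℂ ((NormedSpace.exp ((-(t : ℂ)) • A)) v) v : ℂ)).re
        = ∑ i, ‖(inner ℂ (b i) v : ℂ)‖^2 * Real.exp (-(t * α i)) := by
    intro t v
    have hev : (NormedSpace.exp ((-(t : ℂ)) • A)) v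
        = ∑ i, ((inner ℂ (b i) v : ℂ) * ((Real.exp (-(t * α i)) : ℝ) : ℂ)) • b i := by
      conv_lhs => rw [← b.sum_repr' v]
      rw [map_sum]
      refine Finset.sum_congr rfl fun i _ => ?_
      rw [map_smul, hexp t i, smul_smul]
    rw [hev, sum_inner]
    rw [Complex.re_sum]
    refine Finset.sum_congr rfl fun i _ => ?_
    rw [inner_smul_left]
    simp only [map_mul, Complex.conj_ofReal]
    have : (starRingEnd ℂ) (inner ℂ (b i) v : ℂ) * ((Real.exp (-(t * α i)) : ℝ) : ℂ)
        * (inner ℂ (b i) v : ℂ)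
        = ((‖(inner ℂ (b i) v : ℂ)‖^2 * Real.exp (-(t * α i)) : ℝ) : ℂ) := by
      rw [mul_comm ((starRingEnd ℂ) _) _, mul_assoc, Complex.conj_mul']
      push_cast
      ring
    rw [this, Complex.ofReal_re]
  -- membership characterization
  set W := (⨆ (μ : ℝ) (_ : lam ≤ μ), Module.End.eigenspace (A : V →ₗ[ℂ] V) (μ : ℂ))
    with hWdef
  have hmem : ∀ v : V, v ∈ W ↔ ∀ i, α i < lam → (inner ℂ (b i) v : ℂ) = 0 := by
    intro v
    constructor
    · intro hvW i hi
      have hle : W ≤ (ℂ ∙ (b i))ᗮ := by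
        refine iSup_le fun μ => iSup_le fun hμ => ?_
        intro w hw
        rw [Submodule.mem_orthogonal_singleton_iff_inner_right]
        have hne : ((α i : ℝ) : ℂ) ≠ (μ : ℂ) := by
          exact_mod_cast ne_of_lt (lt_of_lt_of_le hi hμ)
        exact hT.orthogonalFamily_eigenspaces hne ⟨b i, hbe i⟩ ⟨w, hw⟩
      exact (Submodule.mem_orthogonal_singleton_iff_inner_right).mp (hle hvW)
    · intro hcoef
      rw [← b.sum_repr' v]
      refine Submodule.sum_mem _ fun i _ => ?_
      by_cases h : lam ≤ α i
      · exact Submodule.smul_mem _ _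
          (le_iSup₂ (f := fun (μ : ℝ) (_ : lam ≤ μ) =>
            Module.End.eigenspace (A : V →ₗ[ℂ] V) (μ : ℂ)) (α i) h (hbe i))
      · rw [hcoef i (not_le.mp h), zero_smul]
        exact Submodule.zero_mem _
  ext v
  by_cases hv : v = 0
  · subst hv
    simp [hχ0, Submodule.zero_mem, le_top]
  · -- v ≠ 0 : compute χ v
    set S := Finset.univ.filter (fun i => (inner ℂ (b i) v : ℂ) ≠ 0) with hSdef
    set w : Fin (Module.finrank ℂ V) → ℝ := fun i => ‖(inner ℂ (b i) v : ℂ)‖^2 with hwdef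
    have hSw : ∀ i, i ∈ S ↔ w i ≠ 0 := by
      intro i
      simp [hSdef, hwdef, pow_eq_zero_iff, norm_eq_zero]
    have hS : S.Nonempty := by
      by_contra h
      apply hv
      rw [← b.sum_repr' v]
      refine Finset.sum_eq_zero fun i _ => ?_
      have : (inner ℂ (b i) v : ℂ) = 0 := by
        by_contra hne
        exact h ⟨i, (Finset.mem_filter.mpr ⟨Finset.mem_univ i, hne⟩)⟩
      rw [this, zero_smul]
    set m := S.inf' hS α with hmdef
    have htend := log_sum_exp_tendsto w α (fun i => by positivity) S hS hSw
    have htend2 : Filter.Tendsto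
        (fun t : ℝ =>
          ((-((1 / t) *
            Real.log ((inner ℂ ((NormedSpace.exp ((-(t : ℂ)) • A)) v) v : ℂ).re)) : ℝ) :
            EReal))
        Filter.atTop (nhds ((m : ℝ) : EReal)) := by
      refine (EReal.tendsto_coe.mpr htend).congr fun t => ?_
      congr 1
      rw [hinner t v]
    have hχv : χ v = ((m : ℝ) : EReal) := tendsto_nhds_unique (hχ v hv) htend2
    have hiff : (lam : EReal) ≤ χ v ↔ ∀ i, α i < lam → (inner ℂ (b i) v : ℂ) = 0 := by
      rw [hχv, EReal.coe_le_coe_iff, hmdef, Finset.le_inf'_iff]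
      constructor
      · intro h i hi
        by_contra hne
        exact absurd (h i (Finset.mem_filter.mpr ⟨Finset.mem_univ i, hne⟩)) (not_le.mpr hi)
      · intro h i hiS
        by_contra hlt
        exact (Finset.mem_filter.mp hiS).2 (h i (not_le.mp hlt))
    simp only [Set.mem_setOf_eq, SetLike.mem_coe]
    rw [hiff, hmem v]
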